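/- arXiv:2010.12306 — 2 statements merged into one kernel-verified Lean document; each statement's English description precedes it below -/
import Mathlib

section
/- Let L^+ and L^- be probability measures on a measurable space H and let f : H → ℝ be bounded and measurable. Then the logistic risk satisfies R(f) ≥ log( 1 + exp( −(μ^+(f) − μ^−(f))/2 ) ). -/
open MeasureTheory

lemma logistic_hasDerivAt (x : ℝ) :
    HasDerivAt (fun x => Real.log (1 + Real.exp (-x)))
      (Real.exp (-x) * (-1) / (1 + Real.exp (-x))) x := by
  have h1 : HasDerivAt (fun x : ℝ => 1 + Real.exp (-x)) (Real.exp (-x) * (-1)) x :=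
    ((hasDerivAt_neg x).exp).const_add 1
  exact h1.log (by positivity)

lemma logistic_convex : ConvexOn ℝ Set.univ (fun x => Real.log (1 + Real.exp (-x))) := by
  have hderiv : deriv (fun x => Real.log (1 + Real.exp (-x)))
      = fun x => Real.exp (-x) * (-1) / (1 + Real.exp (-x)) := by
    funext x; exact (logistic_hasDerivAt x).deriv
  have h2 : ∀ x : ℝ, HasDerivAt (fun x => Real.exp (-x) * (-1) / (1 + Real.exp (-x)))
      ((Real.exp (-x) * (-1) * (-1) * (1 + Real.exp (-x))
        - Real.exp (-x) * (-1) * (Real.exp (-x) * (-1))) / (1 + Real.exp (-x))^2) x := by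
    intro x
    have hn : HasDerivAt (fun x : ℝ => Real.exp (-x) * (-1)) (Real.exp (-x) * (-1) * (-1)) x :=
      ((hasDerivAt_neg x).exp).mul_const (-1)
    have hd : HasDerivAt (fun x : ℝ => 1 + Real.exp (-x)) (Real.exp (-x) * (-1)) x :=
      ((hasDerivAt_neg x).exp).const_add 1
    exact hn.div hd (by positivity)
  apply convexOn_of_deriv2_nonneg convex_univ
  · exact Continuous.continuousOn ((continuous_const.add
      (Real.continuous_exp.comp continuous_neg)).log (fun x => (add_pos one_pos (Real.exp_pos _)).ne'))
  · intro x _; exact (logistic_hasDerivAt x).differentiableAt.differentiableWithinAt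
  · intro x _
    rw [hderiv]
    exact (h2 x).differentiableAt.differentiableWithinAt
  · intro x _
    rw [Function.iterate_succ, Function.iterate_one, Function.comp_apply, hderiv, (h2 x).deriv]
    have he : (0:ℝ) < Real.exp (-x) := Real.exp_pos _
    have : Real.exp (-x) * (-1) * (-1) * (1 + Real.exp (-x))
        - Real.exp (-x) * (-1) * (Real.exp (-x) * (-1)) = Real.exp (-x) := by ring
    rw [this]
    positivity

/-- For probability measures `L⁺, L⁻` on a measurable space `H` and a bounded
measurable `f : H → ℝ`, the logistic risk under uniform class prior satisfies
`R(f) ≥ log(1 + exp(−(μ⁺(f) − μ⁻(f))/2))`. -/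
theorem logistic_risk_lower_bound
    {H : Type*} [MeasurableSpace H]
    (Lp Lm : Measure H) [IsProbabilityMeasure Lp] [IsProbabilityMeasure Lm]
    (f : H → ℝ) (hf : Measurable f) (B : ℝ) (hB : ∀ h, |f h| ≤ B) :
    (1/2) * (∫ h, Real.log (1 + Real.exp (-(f h))) ∂Lp)
      + (1/2) * (∫ h, Real.log (1 + Real.exp (f h)) ∂Lm)
    ≥ Real.log (1 + Real.exp (-(((∫ h, f h ∂Lp) - ∫ h, f h ∂Lm) / 2))) := by
  set φ : ℝ → ℝ := fun x => Real.log (1 + Real.exp (-x)) with hφdef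
  have hφcont : Continuous φ :=
    (continuous_const.add (Real.continuous_exp.comp continuous_neg)).log (fun x => (add_pos one_pos (Real.exp_pos _)).ne')
  -- bound on φ ∘ (± f)
  have hφbound : ∀ (g : H → ℝ), (∀ h, |g h| ≤ B) → ∀ h, ‖φ (g h)‖ ≤ Real.log (1 + Real.exp B) := by
    intro g hg h
    have h1 : (1:ℝ) ≤ 1 + Real.exp (-(g h)) := le_add_of_nonneg_right (Real.exp_pos _).le
    rw [Real.norm_eq_abs, abs_of_nonneg (Real.log_nonneg h1)]
    apply Real.log_le_log (by positivity)
    have : Real.exp (-(g h)) ≤ Real.exp B :=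
      Real.exp_le_exp.2 (le_trans (neg_le_abs _) (by simpa [abs_neg] using hg h))
    linarith
  have hint : ∀ (μ : Measure H) [IsProbabilityMeasure μ] (g : H → ℝ), Measurable g →
      (∀ h, |g h| ≤ B) → Integrable g μ ∧ Integrable (φ ∘ g) μ := by
    intro μ _ g hg hgB
    constructor
    · exact ⟨hg.aestronglyMeasurable, HasFiniteIntegral.of_bounded (C := B)
        (Filter.Eventually.of_forall fun h => by simpa using hgB h)⟩
    · exact ⟨(hφcont.measurable.comp hg).aestronglyMeasurable,
        HasFiniteIntegral.of_bounded (C := Real.log (1 + Real.exp B))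
        (Filter.Eventually.of_forall fun h => hφbound g hgB h)⟩
  have hconv := logistic_convex
  obtain ⟨hfp, hφfp⟩ := hint Lp f hf hB
  obtain ⟨hfm, hφfm⟩ := hint Lm (fun h => -(f h)) hf.neg (fun h => by simpa [abs_neg] using hB h)
  have j1 : φ (∫ h, f h ∂Lp) ≤ ∫ h, φ (f h) ∂Lp :=
    hconv.map_integral_le hφcont.continuousOn isClosed_univ
      (Filter.Eventually.of_forall fun _ => trivial) hfp hφfp
  have j2 : φ (∫ h, -(f h) ∂Lm) ≤ ∫ h, φ (-(f h)) ∂Lm :=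
    hconv.map_integral_le hφcont.continuousOn isClosed_univ
      (Filter.Eventually.of_forall fun _ => trivial) hfm hφfm
  rw [integral_neg] at j2
  have hφneg : ∀ h, φ (-(f h)) = Real.log (1 + Real.exp (f h)) := by
    intro h; simp [hφdef]
  rw [show (∫ h, φ (-(f h)) ∂Lm) = ∫ h, Real.log (1 + Real.exp (f h)) ∂Lm from by
    simp only [hφneg]] at j2
  set a := ∫ h, f h ∂Lp
  set b := ∫ h, f h ∂Lm
  have hmid : φ ((a - b) / 2) ≤ (1/2) * φ a + (1/2) * φ (-b) := by
    have h := hconv.2 (Set.mem_univ a) (Set.mem_univ (-b))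
      (by norm_num : (0:ℝ) ≤ 1/2) (by norm_num : (0:ℝ) ≤ 1/2) (by norm_num)
    rw [smul_eq_mul, smul_eq_mul, smul_eq_mul, smul_eq_mul] at h
    have he : (1/2:ℝ) * a + (1/2) * (-b) = (a - b) / 2 := by ring
    rw [he] at h
    exact h
  calc Real.log (1 + Real.exp (-((a - b) / 2))) = φ ((a - b) / 2) := rfl
    _ ≤ (1/2) * φ a + (1/2) * φ (-b) := hmid
    _ ≤ (1/2) * (∫ h, Real.log (1 + Real.exp (-(f h))) ∂Lp)
        + (1/2) * (∫ h, Real.log (1 + Real.exp (f h)) ∂Lm) := by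
      have e1 : (∫ h, φ (f h) ∂Lp) = ∫ h, Real.log (1 + Real.exp (-(f h))) ∂Lp := rfl
      rw [e1] at j1
      nlinarith [j1, j2]
end

section
/- Let x_1,…,x_N be points in a set X, let G be a class of functions from X to ℝ that is uniformly bounded on {x_1,…,x_N}, let σ : ℝ → ℝ be Lipschitz with constant L_σ and σ(0) = 0, and let a, b > 0 and m ∈ ℕ. Define the class F = { x ↦ Σ_{j=1}^m w_j σ(g_j(x)) − θ : w ∈ ℝ^m with ‖w‖₁ ≤ b, θ ∈ ℝ with |θ| ≤ a, g_1,…,g_m ∈ G }. Then E[ sup_{f∈F} | (1/N) Σ_{n=1}^N r_n f(x_n) | ] ≤ 2 b L_σ · E[ sup_{g∈G} | (1/N) Σ_{n=1}^N r_n g(x_n) | ] + a/√N, where r_1,…,r_N are i.i.d. uniform on {−1,+1}. -/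
/-- The real sign `±1` associated with a Boolean: `true ↦ +1`, `false ↦ −1`. -/
def rsign (b : Bool) : ℝ := if b then 1 else -1

lemma rsign_abs (b : Bool) : |rsign b| = 1 := by cases b <;> simp [rsign]

lemma rsign_not (b : Bool) : rsign (!b) = - rsign b := by cases b <;> simp [rsign]

lemma bdd_of_le {κ : Type*} (f : κ → ℝ) (M : ℝ) (h : ∀ i, f i ≤ M) :
    BddAbove (Set.range f) := ⟨M, by rintro _ ⟨i, rfl⟩; exact h i⟩

lemma abs_sum_rsign_le {N : ℕ} (s : Fin N → Bool) (w : Fin N → ℝ) (D : ℝ)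
    (hw : ∀ n, |w n| ≤ D) : |∑ n, rsign (s n) * w n| ≤ N * D := by
  calc |∑ n, rsign (s n) * w n| ≤ ∑ n, |rsign (s n) * w n| :=
        Finset.abs_sum_le_sum_abs _ _
    _ ≤ ∑ _n : Fin N, D := Finset.sum_le_sum (fun n _ => by
        rw [abs_mul, rsign_abs, one_mul]; exact hw n)
    _ = N * D := by simp [Finset.sum_const, Finset.card_univ, mul_comm]

lemma flip_involutive {N : ℕ} (n : Fin N) :
    Function.Involutive (fun s : Fin N → Bool => Function.update s n (!(s n))) := by
  intro s; funext j
  by_cases h : j = n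
  · subst h; simp
  · simp [Function.update_of_ne h]

lemma orth {N : ℕ} {n k : Fin N} (hnk : n ≠ k) :
    ∑ s : Fin N → Bool, rsign (s n) * rsign (s k) = 0 := by
  have hs := Equiv.sum_comp ((flip_involutive n).toPerm _)
    (fun s : Fin N → Bool => rsign (s n) * rsign (s k))
  have hval : ∀ s : Fin N → Bool,
      rsign (((flip_involutive n).toPerm _ s) n) * rsign (((flip_involutive n).toPerm _ s) k)
        = -(rsign (s n) * rsign (s k)) := by
    intro s
    have h1 : ((flip_involutive n).toPerm _ s) n = !(s n) := by
      simp [Function.Involutive.coe_toPerm]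
    have h2 : ((flip_involutive n).toPerm _ s) k = s k := by
      simp [Function.Involutive.coe_toPerm, Function.update_of_ne (Ne.symm hnk)]
    rw [h1, h2, rsign_not]; ring
  simp only [hval] at hs
  rw [Finset.sum_neg_distrib] at hs
  linarith

lemma sum_sq_rsign {N : ℕ} :
    ∑ s : Fin N → Bool, (∑ n, rsign (s n)) ^ 2 = 2 ^ N * N := by
  have hcard : Fintype.card (Fin N → Bool) = 2 ^ N := by simp
  have expand : ∀ s : Fin N → Bool,
      (∑ n, rsign (s n)) ^ 2 = ∑ n : Fin N, ∑ k : Fin N, rsign (s n) * rsign (s k) := by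
    intro s; rw [sq, Finset.sum_mul_sum]
  rw [Finset.sum_congr rfl (fun s _ => expand s)]
  rw [Finset.sum_comm]
  have inner : ∀ n : Fin N,
      ∑ s : Fin N → Bool, ∑ k : Fin N, rsign (s n) * rsign (s k) = 2 ^ N := by
    intro n
    rw [Finset.sum_comm]
    have : ∀ k : Fin N, ∑ s : Fin N → Bool, rsign (s n) * rsign (s k)
        = if n = k then (2:ℝ) ^ N else 0 := by
      intro k
      by_cases h : n = k
      · subst h
        simp only [if_pos rfl]
        have : ∀ s : Fin N → Bool, rsign (s n) * rsign (s n) = 1 := by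
          intro s; cases (s n) <;> simp [rsign]
        rw [Finset.sum_congr rfl (fun s _ => this s)]
        simp [hcard]
      · rw [if_neg h]; exact orth h
    rw [Finset.sum_congr rfl (fun k _ => this k)]
    simp
  rw [Finset.sum_congr rfl (fun n _ => inner n)]
  simp [mul_comm]

lemma khintchine (N : ℕ) :
    ∑ s : Fin N → Bool, |∑ n, rsign (s n)| ≤ 2 ^ N * Real.sqrt N := by
  have hCS := Finset.sum_mul_sq_le_sq_mul_sq Finset.univ (fun _ => (1:ℝ))
    (fun s : Fin N → Bool => |∑ n, rsign (s n)|)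
  simp only [one_mul, one_pow, sq_abs, Finset.sum_const, Finset.card_univ, nsmul_eq_mul] at hCS
  rw [sum_sq_rsign] at hCS
  have hcard : (Fintype.card (Fin N → Bool) : ℝ) = 2 ^ N := by simp
  rw [hcard] at hCS
  have h0 : (0:ℝ) ≤ ∑ s : Fin N → Bool, |∑ n, rsign (s n)| :=
    Finset.sum_nonneg fun s _ => abs_nonneg _
  have h := Real.sqrt_le_sqrt hCS
  rw [Real.sqrt_sq h0] at h
  calc ∑ s : Fin N → Bool, |∑ n, rsign (s n)|
      ≤ Real.sqrt (2 ^ N * (2 ^ N * N)) := by rw [mul_one] at h; exact h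
    _ = 2 ^ N * Real.sqrt N := by
        rw [← mul_assoc, ← sq, Real.sqrt_mul (sq_nonneg _),
          Real.sqrt_sq (by positivity)]

lemma core_swap {κ : Type*} [Nonempty κ] (p q B : κ → ℝ)
    (hpq : ∀ i j, p i - p j ≤ |q i - q j|)
    (h1 : BddAbove (Set.range fun i => q i + B i))
    (h2 : BddAbove (Set.range fun i => -q i + B i)) :
    (⨆ i, p i + B i) + (⨆ i, -p i + B i)
      ≤ (⨆ i, q i + B i) + (⨆ i, -q i + B i) := by
  set R := (⨆ i, q i + B i) + (⨆ i, -q i + B i) with hR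
  have key : ∀ i j, (p i + B i) + (-p j + B j) ≤ R := by
    intro i j
    have hij := hpq i j
    rcases le_total (q j) (q i) with h | h
    · rw [abs_of_nonneg (by linarith)] at hij
      have a1 : q i + B i ≤ ⨆ i, q i + B i := le_ciSup h1 i
      have a2 : -q j + B j ≤ ⨆ i, -q i + B i := le_ciSup h2 j
      rw [hR]; linarith
    · rw [abs_of_nonpos (by linarith)] at hij
      have a1 : q j + B j ≤ ⨆ i, q i + B i := le_ciSup h1 j
      have a2 : -q i + B i ≤ ⨆ i, -q i + B i := le_ciSup h2 i
      rw [hR]; linarith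
  have step1 : ∀ i, (⨆ j, -p j + B j) ≤ R - (p i + B i) := fun i =>
    ciSup_le fun j => by linarith [key i j]
  have step2 : (⨆ i, p i + B i) ≤ R - (⨆ j, -p j + B j) :=
    ciSup_le fun i => by linarith [step1 i]
  linarith

lemma contraction_step {N : ℕ} {κ : Type*} [Nonempty κ]
    (w w' : κ → Fin N → ℝ) (k : Fin N)
    (hoff : ∀ i n, n ≠ k → w' i n = w i n)
    (hpq : ∀ i j, w' i k - w' j k ≤ |w i k - w j k|)
    (D : ℝ) (hD : ∀ i n, |w i n| ≤ D) (hD' : ∀ i n, |w' i n| ≤ D) :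
    ∑ s : Fin N → Bool, ⨆ i, ∑ n, rsign (s n) * w' i n
      ≤ ∑ s : Fin N → Bool, ⨆ i, ∑ n, rsign (s n) * w i n := by
  classical
  set flip : (Fin N → Bool) → (Fin N → Bool) :=
    fun s => Function.update s k (!(s k)) with hflip
  have hinv : Function.Involutive flip := flip_involutive k
  set F : (Fin N → Bool) → ℝ := fun s => ⨆ i, ∑ n, rsign (s n) * w i n with hF
  set F' : (Fin N → Bool) → ℝ := fun s => ⨆ i, ∑ n, rsign (s n) * w' i n with hF'
  have hpoint : ∀ s : Fin N → Bool, F' s + F' (flip s) ≤ F s + F (flip s) := by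
    intro s
    set ε := rsign (s k) with hε
    set p : κ → ℝ := fun i => ε * w' i k with hp
    set q : κ → ℝ := fun i => ε * w i k with hq
    set B : κ → ℝ := fun i => ∑ n ∈ Finset.univ.erase k, rsign (s n) * w i n with hB
    have hflipk : rsign ((flip s) k) = -ε := by
      rw [hflip]; simp only [Function.update_self]; rw [rsign_not, hε]
    have hflipn : ∀ n : Fin N, n ≠ k → (flip s) n = s n := by
      intro n hn; rw [hflip]; simp only [Function.update_of_ne hn]
    have claimW : ∀ i, ∑ n, rsign (s n) * w i n = q i + B i := by
      intro i
      rw [← Finset.add_sum_erase Finset.univ _ (Finset.mem_univ k)]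
    have claimW' : ∀ i, ∑ n, rsign (s n) * w' i n = p i + B i := by
      intro i
      rw [← Finset.add_sum_erase Finset.univ _ (Finset.mem_univ k)]
      congr 1
      exact Finset.sum_congr rfl fun n hn => by
        rw [hoff i n (Finset.ne_of_mem_erase hn)]
    have claimWf : ∀ i, ∑ n, rsign ((flip s) n) * w i n = -q i + B i := by
      intro i
      rw [← Finset.add_sum_erase Finset.univ _ (Finset.mem_univ k), hflipk]
      have : ∑ n ∈ Finset.univ.erase k, rsign ((flip s) n) * w i n = B i :=
        Finset.sum_congr rfl fun n hn => by
          rw [hflipn n (Finset.ne_of_mem_erase hn)]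
      rw [this, hq]; ring_nf
    have claimWf' : ∀ i, ∑ n, rsign ((flip s) n) * w' i n = -p i + B i := by
      intro i
      rw [← Finset.add_sum_erase Finset.univ _ (Finset.mem_univ k), hflipk]
      have : ∑ n ∈ Finset.univ.erase k, rsign ((flip s) n) * w' i n = B i :=
        Finset.sum_congr rfl fun n hn => by
          rw [hflipn n (Finset.ne_of_mem_erase hn),
            hoff i n (Finset.ne_of_mem_erase hn)]
      rw [this, hp]; ring_nf
    have h1 : BddAbove (Set.range fun i => q i + B i) := by
      apply bdd_of_le _ ((N : ℝ) * D); intro i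
      rw [← claimW i]
      exact (le_abs_self _).trans (abs_sum_rsign_le s (w i) D (hD i))
    have h2 : BddAbove (Set.range fun i => -q i + B i) := by
      apply bdd_of_le _ ((N : ℝ) * D); intro i
      rw [← claimWf i]
      exact (le_abs_self _).trans (abs_sum_rsign_le (flip s) (w i) D (hD i))
    have hpq2 : ∀ i j, p i - p j ≤ |q i - q j| := by
      intro i j
      have habs : |q i - q j| = |w i k - w j k| := by
        have h : q i - q j = ε * (w i k - w j k) := by rw [hq]; ring
        rw [h, abs_mul, hε, rsign_abs, one_mul]
      have hpd : p i - p j = ε * (w' i k - w' j k) := by rw [hp]; ring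
      rw [habs, hpd]
      cases hsk : s k
      · have : ε = -1 := by rw [hε, hsk]; simp [rsign]
        rw [this, abs_sub_comm]
        have := hpq j i
        linarith
      · have : ε = 1 := by rw [hε, hsk]; simp [rsign]
        rw [this, one_mul]
        exact hpq i j
    have hc := core_swap p q B hpq2 h1 h2
    calc F' s + F' (flip s) = (⨆ i, p i + B i) + (⨆ i, -p i + B i) := by
          rw [hF']; simp only []
          rw [iSup_congr claimW', iSup_congr claimWf']
      _ ≤ (⨆ i, q i + B i) + (⨆ i, -q i + B i) := hc
      _ = F s + F (flip s) := by
          rw [hF]; simp only []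
          rw [iSup_congr claimW, iSup_congr claimWf]
  have hsum : ∀ (H : (Fin N → Bool) → ℝ),
      ∑ s : Fin N → Bool, (H s + H (flip s)) = 2 * ∑ s : Fin N → Bool, H s := by
    intro H
    rw [Finset.sum_add_distrib]
    have := Equiv.sum_comp (hinv.toPerm _) H
    have heq : ∑ s : Fin N → Bool, H (flip s) = ∑ s : Fin N → Bool, H s := by
      rw [← this]
      exact Finset.sum_congr rfl fun s _ => by
        congr 1
    rw [heq]; ring
  have := Finset.sum_le_sum (fun s (_ : s ∈ Finset.univ) => hpoint s)
  rw [hsum F', hsum F] at this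
  linarith

lemma contraction {N : ℕ} {κ : Type*} [Nonempty κ]
    (v : κ → Fin N → ℝ) (C : ℝ) (hv : ∀ i n, |v i n| ≤ C)
    (L : ℝ) (hL : 0 ≤ L) (φ : ℝ → ℝ)
    (hφ : ∀ s t, |φ s - φ t| ≤ L * |s - t|) :
    ∑ s : Fin N → Bool, ⨆ i, ∑ n, rsign (s n) * φ (v i n)
      ≤ ∑ s : Fin N → Bool, ⨆ i, ∑ n, rsign (s n) * (L * v i n) := by
  classical
  set w : Finset (Fin N) → κ → Fin N → ℝ :=
    fun A i n => if n ∈ A then φ (v i n) else L * v i n with hw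
  set D : ℝ := L * C + |φ 0| with hD
  have hwD : ∀ A i n, |w A i n| ≤ D := by
    intro A i n
    have hC0 : (0:ℝ) ≤ C := (abs_nonneg _).trans (hv i n)
    rw [hw]
    by_cases h : n ∈ A
    · simp only [if_pos h]
      have h1 : |φ (v i n) - φ 0| ≤ L * |v i n - 0| := hφ _ _
      rw [sub_zero] at h1
      have h2 : |φ (v i n)| ≤ |φ (v i n) - φ 0| + |φ 0| := by
        have := abs_sub_abs_le_abs_sub (φ (v i n)) (φ 0)
        have := abs_add_le (φ (v i n) - φ 0) (φ 0)
        calc |φ (v i n)| = |(φ (v i n) - φ 0) + φ 0| := by ring_nf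
          _ ≤ |φ (v i n) - φ 0| + |φ 0| := abs_add_le _ _
      have h3 : L * |v i n| ≤ L * C := mul_le_mul_of_nonneg_left (hv i n) hL
      rw [hD]; linarith
    · simp only [if_neg h, abs_mul, abs_of_nonneg hL, hD]
      have h3 : L * |v i n| ≤ L * C := mul_le_mul_of_nonneg_left (hv i n) hL
      have : (0:ℝ) ≤ |φ 0| := abs_nonneg _
      linarith
  have main : ∀ A : Finset (Fin N),
      ∑ s : Fin N → Bool, ⨆ i, ∑ n, rsign (s n) * w A i n
        ≤ ∑ s : Fin N → Bool, ⨆ i, ∑ n, rsign (s n) * w ∅ i n := by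
    intro A
    induction A using Finset.induction_on with
    | empty => exact le_refl _
    | insert k A hk ih =>
        refine le_trans ?_ ih
        apply contraction_step (w A) (w (insert k A)) k
        · intro i n hn
          rw [hw]
          simp only []
          by_cases h : n ∈ A
          · rw [if_pos h, if_pos (Finset.mem_insert_of_mem h)]
          · rw [if_neg h, if_neg (by
              intro hmem
              rcases Finset.mem_insert.mp hmem with h1 | h1
              · exact hn h1
              · exact h h1)]
        · intro i j
          rw [hw]
          simp only [Finset.mem_insert_self, if_pos, if_neg hk]
          have h1 : |φ (v i k) - φ (v j k)| ≤ L * |v i k - v j k| := hφ _ _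
          have h2 : L * |v i k - v j k| = |L * v i k - L * v j k| := by
            rw [← mul_sub, abs_mul, abs_of_nonneg hL]
          calc φ (v i k) - φ (v j k) ≤ |φ (v i k) - φ (v j k)| := le_abs_self _
            _ ≤ L * |v i k - v j k| := h1
            _ = |L * v i k - L * v j k| := h2
        · exact hwD A
        · exact hwD (insert k A)
  have h1 := main Finset.univ
  have e1 : ∀ (s : Fin N → Bool) i, ∑ n, rsign (s n) * w Finset.univ i n
      = ∑ n, rsign (s n) * φ (v i n) := by
    intro s i; exact Finset.sum_congr rfl fun n _ => by rw [hw]; simp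
  have e2 : ∀ (s : Fin N → Bool) i, ∑ n, rsign (s n) * w ∅ i n
      = ∑ n, rsign (s n) * (L * v i n) := by
    intro s i; exact Finset.sum_congr rfl fun n _ => by rw [hw]; simp
  calc ∑ s : Fin N → Bool, ⨆ i, ∑ n, rsign (s n) * φ (v i n)
      = ∑ s : Fin N → Bool, ⨆ i, ∑ n, rsign (s n) * w Finset.univ i n := by
        exact Finset.sum_congr rfl fun s _ => by rw [iSup_congr (e1 s)]
    _ ≤ ∑ s : Fin N → Bool, ⨆ i, ∑ n, rsign (s n) * w ∅ i n := h1
    _ = ∑ s : Fin N → Bool, ⨆ i, ∑ n, rsign (s n) * (L * v i n) := by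
        exact Finset.sum_congr rfl fun s _ => by rw [iSup_congr (e2 s)]

lemma abs_contraction {N : ℕ} {κ : Type*} [Nonempty κ]
    (v : κ → Fin N → ℝ) (C : ℝ) (hv : ∀ i n, |v i n| ≤ C)
    (L : ℝ) (hL : 0 ≤ L) (φ : ℝ → ℝ)
    (hφ : ∀ s t, |φ s - φ t| ≤ L * |s - t|) (hφ0 : φ 0 = 0) :
    ∑ s : Fin N → Bool, ⨆ i, |∑ n, rsign (s n) * φ (v i n)|
      ≤ 2 * L * ∑ s : Fin N → Bool, ⨆ i, |∑ n, rsign (s n) * v i n| := by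
  classical
  rcases Nat.eq_zero_or_pos N with hN | hN
  · subst hN
    simp
  have hC0 : (0:ℝ) ≤ C := (abs_nonneg _).trans (hv (Classical.arbitrary κ) ⟨0, hN⟩)
  set v' : Option κ → Fin N → ℝ := fun i n => i.elim 0 (fun j => v j n) with hv'
  have hv'C : ∀ i n, |v' i n| ≤ C := by
    rintro (_ | i) n
    · simpa [hv'] using hC0
    · exact hv i n
  have hφabs : ∀ t, |φ t| ≤ L * C → True := fun _ _ => trivial
  -- bound on |φ (v' i n)|
  have hφb : ∀ (i : Option κ) (n : Fin N), |φ (v' i n)| ≤ L * C := by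
    intro i n
    have h := hφ (v' i n) 0
    rw [hφ0, sub_zero, sub_zero] at h
    exact h.trans (mul_le_mul_of_nonneg_left (hv'C i n) hL)
  -- contraction for φ and for -φ on the Option class
  have hcon1 := contraction v' C hv'C L hL φ hφ
  have hcon2 := contraction v' C hv'C L hL (fun t => -φ t)
    (by
      intro s t
      have h := hφ s t
      calc |-φ s - -φ t| = |φ s - φ t| := by rw [← abs_neg]; ring_nf
        _ ≤ L * |s - t| := h)
  -- per-s pointwise bound: sup |A| ≤ supP + supQ
  have hstep1 : ∀ s : Fin N → Bool,
      (⨆ i, |∑ n, rsign (s n) * φ (v i n)|)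
        ≤ (⨆ i : Option κ, ∑ n, rsign (s n) * φ (v' i n))
          + (⨆ i : Option κ, ∑ n, rsign (s n) * (fun t => -φ t) (v' i n)) := by
    intro s
    have hbdP : BddAbove (Set.range fun i : Option κ => ∑ n, rsign (s n) * φ (v' i n)) :=
      bdd_of_le _ ((N : ℝ) * (L * C)) fun i =>
        (le_abs_self _).trans (abs_sum_rsign_le s _ _ (hφb i))
    have hbdQ : BddAbove (Set.range fun i : Option κ =>
        ∑ n, rsign (s n) * (fun t => -φ t) (v' i n)) :=
      bdd_of_le _ ((N : ℝ) * (L * C)) fun i =>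
        (le_abs_self _).trans (abs_sum_rsign_le s _ _ (fun n => by
          simpa using hφb i n))
    have hP0 : (0:ℝ) ≤ ⨆ i : Option κ, ∑ n, rsign (s n) * φ (v' i n) := by
      have := le_ciSup hbdP (none : Option κ)
      simpa [hv', hφ0] using this
    have hQ0 : (0:ℝ) ≤ ⨆ i : Option κ, ∑ n, rsign (s n) * (fun t => -φ t) (v' i n) := by
      have := le_ciSup hbdQ (none : Option κ)
      simpa [hv', hφ0] using this
    apply ciSup_le
    intro i
    have hPi : ∑ n, rsign (s n) * φ (v i n)
        ≤ ⨆ i : Option κ, ∑ n, rsign (s n) * φ (v' i n) := by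
      have := le_ciSup hbdP (some i)
      simpa [hv'] using this
    have hQi : -(∑ n, rsign (s n) * φ (v i n))
        ≤ ⨆ i : Option κ, ∑ n, rsign (s n) * (fun t => -φ t) (v' i n) := by
      have := le_ciSup hbdQ (some i)
      simpa [hv', Finset.sum_neg_distrib, mul_neg] using this
    rw [abs_le]
    constructor <;> linarith
  -- per-s bound on relaxed sup
  have hstep2 : ∀ s : Fin N → Bool,
      (⨆ i : Option κ, ∑ n, rsign (s n) * (L * v' i n))
        ≤ L * ⨆ i, |∑ n, rsign (s n) * v i n| := by
    intro s
    have hbdR : BddAbove (Set.range fun i : κ => |∑ n, rsign (s n) * v i n|) :=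
      bdd_of_le _ ((N : ℝ) * C) fun i => abs_sum_rsign_le s _ _ (hv i)
    have hR0 : (0:ℝ) ≤ ⨆ i, |∑ n, rsign (s n) * v i n| :=
      le_trans (abs_nonneg _) (le_ciSup hbdR (Classical.arbitrary κ))
    apply ciSup_le
    rintro (_ | i)
    · simp only [hv']
      simp
      positivity
    · have h1 : ∑ n, rsign (s n) * (L * v' (some i) n)
          = L * ∑ n, rsign (s n) * v i n := by
        rw [Finset.mul_sum]
        exact Finset.sum_congr rfl fun n _ => by simp [hv']; ring
      rw [h1]
      exact mul_le_mul_of_nonneg_left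
        ((le_abs_self _).trans (le_ciSup hbdR i)) hL
  calc ∑ s : Fin N → Bool, ⨆ i, |∑ n, rsign (s n) * φ (v i n)|
      ≤ ∑ s : Fin N → Bool,
          ((⨆ i : Option κ, ∑ n, rsign (s n) * φ (v' i n))
            + (⨆ i : Option κ, ∑ n, rsign (s n) * (fun t => -φ t) (v' i n))) :=
        Finset.sum_le_sum fun s _ => hstep1 s
    _ = (∑ s : Fin N → Bool, ⨆ i : Option κ, ∑ n, rsign (s n) * φ (v' i n))
        + ∑ s : Fin N → Bool, ⨆ i : Option κ,
            ∑ n, rsign (s n) * (fun t => -φ t) (v' i n) := Finset.sum_add_distrib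
    _ ≤ (∑ s : Fin N → Bool, ⨆ i : Option κ, ∑ n, rsign (s n) * (L * v' i n))
        + ∑ s : Fin N → Bool, ⨆ i : Option κ, ∑ n, rsign (s n) * (L * v' i n) := by
        exact add_le_add hcon1 hcon2
    _ ≤ (∑ s : Fin N → Bool, L * ⨆ i, |∑ n, rsign (s n) * v i n|)
        + ∑ s : Fin N → Bool, L * ⨆ i, |∑ n, rsign (s n) * v i n| := by
        have := Finset.sum_le_sum fun s (_ : s ∈ Finset.univ) => hstep2 s
        exact add_le_add this this
    _ = 2 * L * ∑ s : Fin N → Bool, ⨆ i, |∑ n, rsign (s n) * v i n| := by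
        rw [← Finset.mul_sum]; ring

/-- layer peeling: for points `x_1,…,x_N`, a class `G = {G i}` of real
functions uniformly bounded on the points, a Lipschitz activation `σ` with constant `Lσ`
and `σ(0) = 0`, and the one-layer class
`F = { x ↦ Σ_j w_j σ(g_j(x)) − θ : ‖w‖₁ ≤ b, |θ| ≤ a, g_j ∈ G }`, one has
`E[ sup_{f∈F} |(1/N) Σ_n r_n f(x_n)| ] ≤ 2 b Lσ · E[ sup_{g∈G} |(1/N) Σ_n r_n g(x_n)| ] + a/√N`.
The expectation over the i.i.d. uniform signs is written as the average over all `2^N`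
sign patterns `s : Fin N → Bool`. -/
theorem rademacher_layer_peeling
    {X : Type*} {N m : ℕ} {ι : Type*} [Nonempty ι]
    (x : Fin N → X) (G : ι → X → ℝ)
    (C : ℝ) (hC : ∀ i n, |G i (x n)| ≤ C)
    (σ : ℝ → ℝ) (Lσ : ℝ) (hLσ : 0 ≤ Lσ)
    (hlip : ∀ s t, |σ s - σ t| ≤ Lσ * |s - t|) (hσ0 : σ 0 = 0)
    (a b : ℝ) (ha : 0 < a) (hb : 0 < b) :
    (∑ s : Fin N → Bool,
        ⨆ p : {p : (Fin m → ℝ) × ℝ × (Fin m → ι) //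
            (∑ j, |p.1 j| ≤ b) ∧ |p.2.1| ≤ a},
          |((1 : ℝ) / N) * ∑ n, rsign (s n) *
            ((∑ j, p.1.1 j * σ (G (p.1.2.2 j) (x n))) - p.1.2.1)|) / 2 ^ N
      ≤ 2 * b * Lσ * ((∑ s : Fin N → Bool,
          ⨆ i, |((1 : ℝ) / N) * ∑ n, rsign (s n) * G i (x n)|) / 2 ^ N)
        + a / Real.sqrt N := by
  classical
  haveI hne : Nonempty {p : (Fin m → ℝ) × ℝ × (Fin m → ι) //
      (∑ j, |p.1 j| ≤ b) ∧ |p.2.1| ≤ a} :=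
    ⟨⟨(0, 0, fun _ => Classical.arbitrary ι), by simp [hb.le], by simp [ha.le]⟩⟩
  rcases Nat.eq_zero_or_pos N with hN | hN
  · subst hN
    simp [ciSup_const]
  have hNpos : (0:ℝ) < (N:ℝ) := by exact_mod_cast hN
  have hc : (0:ℝ) < (1:ℝ)/(N:ℝ) := by positivity
  set c : ℝ := (1:ℝ)/(N:ℝ) with hcdef
  have hC0 : (0:ℝ) ≤ C := (abs_nonneg _).trans (hC (Classical.arbitrary ι) ⟨0, hN⟩)
  have hσb : ∀ i n, |σ (G i (x n))| ≤ Lσ * C := by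
    intro i n
    have h := hlip (G i (x n)) 0
    rw [hσ0, sub_zero, sub_zero] at h
    exact h.trans (mul_le_mul_of_nonneg_left (hC i n) hLσ)
  set S0 : (Fin N → Bool) → ℝ :=
    fun s => ⨆ i, |∑ n, rsign (s n) * σ (G i (x n))| with hS0
  set R0 : (Fin N → Bool) → ℝ :=
    fun s => ⨆ i, |∑ n, rsign (s n) * G i (x n)| with hR0
  set T : (Fin N → Bool) → ℝ := fun s => ∑ n, rsign (s n) with hT
  have hbS : ∀ s : Fin N → Bool, BddAbove (Set.range fun i => |∑ n, rsign (s n) * σ (G i (x n))|) :=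
    fun s => bdd_of_le _ ((N:ℝ) * (Lσ * C)) fun i => abs_sum_rsign_le s _ _ (hσb i)
  have hbR : ∀ s : Fin N → Bool, BddAbove (Set.range fun i => |∑ n, rsign (s n) * G i (x n)|) :=
    fun s => bdd_of_le _ ((N:ℝ) * C) fun i => abs_sum_rsign_le s _ _ (hC i)
  have hS0nn : ∀ s, 0 ≤ S0 s := fun s =>
    (abs_nonneg _).trans (le_ciSup (hbS s) (Classical.arbitrary ι))
  have hR0nn : ∀ s, 0 ≤ R0 s := fun s =>
    (abs_nonneg _).trans (le_ciSup (hbR s) (Classical.arbitrary ι))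
  -- Step 1: pointwise bound on the function-class sup
  have step1 : ∀ s : Fin N → Bool,
      (⨆ p : {p : (Fin m → ℝ) × ℝ × (Fin m → ι) //
            (∑ j, |p.1 j| ≤ b) ∧ |p.2.1| ≤ a},
          |c * ∑ n, rsign (s n) *
            ((∑ j, p.1.1 j * σ (G (p.1.2.2 j) (x n))) - p.1.2.1)|)
        ≤ c * (b * S0 s + a * |T s|) := by
    intro s
    apply ciSup_le
    rintro ⟨⟨w, θ, g⟩, hw, hθ⟩
    show |c * ∑ n, rsign (s n) * ((∑ j, w j * σ (G (g j) (x n))) - θ)| ≤ _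
    have key : ∑ n, rsign (s n) * ((∑ j, w j * σ (G (g j) (x n))) - θ)
        = (∑ j, w j * ∑ n, rsign (s n) * σ (G (g j) (x n))) - θ * T s := by
      have e1 : ∀ n : Fin N, rsign (s n) * ((∑ j, w j * σ (G (g j) (x n))) - θ)
          = (∑ j, w j * (rsign (s n) * σ (G (g j) (x n)))) - rsign (s n) * θ := by
        intro n
        rw [mul_sub, Finset.mul_sum]
        congr 1
        exact Finset.sum_congr rfl fun j _ => by ring
      rw [Finset.sum_congr rfl fun n _ => e1 n, Finset.sum_sub_distrib]
      congr 1
      · rw [Finset.sum_comm]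
        exact Finset.sum_congr rfl fun j _ => by rw [← Finset.mul_sum]
      · rw [hT, ← Finset.sum_mul, mul_comm]
    rw [key, abs_mul, abs_of_pos hc]
    have h1 : |(∑ j, w j * ∑ n, rsign (s n) * σ (G (g j) (x n))) - θ * T s|
        ≤ b * S0 s + a * |T s| := by
      have hA : |∑ j, w j * ∑ n, rsign (s n) * σ (G (g j) (x n))| ≤ b * S0 s := by
        calc |∑ j, w j * ∑ n, rsign (s n) * σ (G (g j) (x n))|
            ≤ ∑ j, |w j * ∑ n, rsign (s n) * σ (G (g j) (x n))| :=
              Finset.abs_sum_le_sum_abs _ _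
          _ = ∑ j, |w j| * |∑ n, rsign (s n) * σ (G (g j) (x n))| := by
              exact Finset.sum_congr rfl fun j _ => abs_mul _ _
          _ ≤ ∑ j, |w j| * S0 s := Finset.sum_le_sum fun j _ =>
              mul_le_mul_of_nonneg_left (le_ciSup (hbS s) (g j)) (abs_nonneg _)
          _ = (∑ j, |w j|) * S0 s := by rw [Finset.sum_mul]
          _ ≤ b * S0 s := mul_le_mul_of_nonneg_right hw (hS0nn s)
      have hB : |θ * T s| ≤ a * |T s| := by
        rw [abs_mul]
        exact mul_le_mul_of_nonneg_right hθ (abs_nonneg _)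
      calc |(∑ j, w j * ∑ n, rsign (s n) * σ (G (g j) (x n))) - θ * T s|
          ≤ |∑ j, w j * ∑ n, rsign (s n) * σ (G (g j) (x n))| + |θ * T s| :=
            abs_sub _ _
        _ ≤ b * S0 s + a * |T s| := add_le_add hA hB
    exact mul_le_mul_of_nonneg_left h1 hc.le
  -- contraction
  have hcontr : ∑ s : Fin N → Bool, S0 s ≤ 2 * Lσ * ∑ s : Fin N → Bool, R0 s :=
    abs_contraction (fun i n => G i (x n)) C hC Lσ hLσ σ hlip hσ0
  -- Khintchine
  have hkh : ∑ s : Fin N → Bool, |T s| ≤ 2 ^ N * Real.sqrt N := khintchine N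
  -- rewrite the RHS sup
  have hRHSeq : ∀ s : Fin N → Bool,
      (⨆ i, |c * ∑ n, rsign (s n) * G i (x n)|) = c * R0 s := by
    intro s
    rw [hR0, Real.mul_iSup_of_nonneg hc.le]
    exact iSup_congr fun i => by rw [abs_mul, abs_of_pos hc]
  have h2N : (0:ℝ) < 2 ^ N := by positivity
  -- main chain
  have chain1 : (∑ s : Fin N → Bool,
        ⨆ p : {p : (Fin m → ℝ) × ℝ × (Fin m → ι) //
            (∑ j, |p.1 j| ≤ b) ∧ |p.2.1| ≤ a},
          |c * ∑ n, rsign (s n) *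
            ((∑ j, p.1.1 j * σ (G (p.1.2.2 j) (x n))) - p.1.2.1)|)
      ≤ c * b * (∑ s : Fin N → Bool, S0 s) + c * a * (∑ s : Fin N → Bool, |T s|) := by
    calc (∑ s : Fin N → Bool, ⨆ p : {p : (Fin m → ℝ) × ℝ × (Fin m → ι) //
            (∑ j, |p.1 j| ≤ b) ∧ |p.2.1| ≤ a},
          |c * ∑ n, rsign (s n) *
            ((∑ j, p.1.1 j * σ (G (p.1.2.2 j) (x n))) - p.1.2.1)|)
        ≤ ∑ s : Fin N → Bool, c * (b * S0 s + a * |T s|) :=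
          Finset.sum_le_sum fun s _ => step1 s
      _ = c * b * (∑ s : Fin N → Bool, S0 s) + c * a * (∑ s : Fin N → Bool, |T s|) := by
          rw [Finset.mul_sum, Finset.mul_sum, ← Finset.sum_add_distrib]
          exact Finset.sum_congr rfl fun s _ => by ring
  have bound1 : c * b * (∑ s : Fin N → Bool, S0 s) / 2 ^ N
      ≤ 2 * b * Lσ * ((c * ∑ s : Fin N → Bool, R0 s) / 2 ^ N) := by
    have h := mul_le_mul_of_nonneg_left hcontr
      (show (0:ℝ) ≤ c * b / 2 ^ N by positivity)
    calc c * b * (∑ s : Fin N → Bool, S0 s) / 2 ^ N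
        = c * b / 2 ^ N * (∑ s : Fin N → Bool, S0 s) := by ring
      _ ≤ c * b / 2 ^ N * (2 * Lσ * ∑ s : Fin N → Bool, R0 s) := h
      _ = 2 * b * Lσ * ((c * ∑ s : Fin N → Bool, R0 s) / 2 ^ N) := by ring
  have bound2 : c * a * (∑ s : Fin N → Bool, |T s|) / 2 ^ N ≤ a / Real.sqrt N := by
    have h := mul_le_mul_of_nonneg_left hkh
      (show (0:ℝ) ≤ c * a / 2 ^ N by positivity)
    have hsq : Real.sqrt N * Real.sqrt N = (N:ℝ) := Real.mul_self_sqrt hNpos.le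
    have hsne : Real.sqrt N ≠ 0 := by positivity
    have heq : c * a / 2 ^ N * (2 ^ N * Real.sqrt N) = a / Real.sqrt N := by
      rw [hcdef, eq_div_iff hsne]
      field_simp
      linear_combination hsq
    calc c * a * (∑ s : Fin N → Bool, |T s|) / 2 ^ N
        = c * a / 2 ^ N * (∑ s : Fin N → Bool, |T s|) := by ring
      _ ≤ c * a / 2 ^ N * (2 ^ N * Real.sqrt N) := h
      _ = a / Real.sqrt N := heq
  -- finish
  have hfinal : (∑ s : Fin N → Bool,
        ⨆ p : {p : (Fin m → ℝ) × ℝ × (Fin m → ι) //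
            (∑ j, |p.1 j| ≤ b) ∧ |p.2.1| ≤ a},
          |c * ∑ n, rsign (s n) *
            ((∑ j, p.1.1 j * σ (G (p.1.2.2 j) (x n))) - p.1.2.1)|) / 2 ^ N
      ≤ 2 * b * Lσ * ((c * ∑ s : Fin N → Bool, R0 s) / 2 ^ N) + a / Real.sqrt N := by
    calc (∑ s : Fin N → Bool,
        ⨆ p : {p : (Fin m → ℝ) × ℝ × (Fin m → ι) //
            (∑ j, |p.1 j| ≤ b) ∧ |p.2.1| ≤ a},
          |c * ∑ n, rsign (s n) *
            ((∑ j, p.1.1 j * σ (G (p.1.2.2 j) (x n))) - p.1.2.1)|) / 2 ^ N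
        ≤ (c * b * (∑ s : Fin N → Bool, S0 s)
            + c * a * (∑ s : Fin N → Bool, |T s|)) / 2 ^ N := by
          gcongr
      _ = c * b * (∑ s : Fin N → Bool, S0 s) / 2 ^ N
            + c * a * (∑ s : Fin N → Bool, |T s|) / 2 ^ N := by rw [add_div]
      _ ≤ 2 * b * Lσ * ((c * ∑ s : Fin N → Bool, R0 s) / 2 ^ N) + a / Real.sqrt N :=
          add_le_add bound1 bound2
  have hgoalRHS : (∑ s : Fin N → Bool,
      ⨆ i, |c * ∑ n, rsign (s n) * G i (x n)|) = c * ∑ s : Fin N → Bool, R0 s := by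
    rw [Finset.mul_sum]
    exact Finset.sum_congr rfl fun s _ => hRHSeq s
  rw [hgoalRHS]
  exact hfinal
end
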